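/- Let S be a semigroup with identity generated by A = {e, g}, where e is an idempotent, and let S₀ = eSe. Suppose e g^{k₁} e g^{k₂} e = e g^{k₂} e g^{k₁} e for all nonnegative integers k₁, k₂. Let φ be a semigroup homomorphism from S₀ into a semigroup (X, ∗) such that the sequence W = {φ(e gᵏ e)}_{k=1}^∞ has many partition products in X. Then S has superpolynomial growth, i.e., lim_{n→∞} (log γ_A(n))/(log n) = ∞. -/

import Mathlib

open Filter

/-- `A` generates the semigroup-with-identity `S`: every element of `S` is a
(finite, possibly empty) product of elements of `A`. -/
def Generates {S : Type*} [Monoid S] (A : Set S) : Prop :=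
  ∀ x : S, ∃ l : List S, (∀ a ∈ l, a ∈ A) ∧ l.prod = x

/-- The growth function `γ_A(n)`: the number of elements expressible as a product
of at most `n` elements of `A` (equivalently, the number of `x` with `ℓ_A(x) ≤ n`). -/
noncomputable def growth {S : Type*} [Monoid S] (A : Set S) (n : ℕ) : ℕ :=
  Set.ncard {x : S | ∃ l : List S, (∀ a ∈ l, a ∈ A) ∧ l.length ≤ n ∧ l.prod = x}

/-- `W_r(n)`: the set of products `w_{k₁} ∗ ⋯ ∗ w_{k_r}` over positive integers
`k₁ ≥ k₂ ≥ ⋯ ≥ k_r` with `k₁ + ⋯ + k_r ≤ n` (products of nonempty lists in a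
semigroup, formed by left folding). -/
def WrSet {X : Type*} [Mul X] (w : ℕ → X) (r n : ℕ) : Set X :=
  {x : X | ∃ k : ℕ, ∃ l : List ℕ, (k :: l).length = r ∧ (∀ m ∈ k :: l, 1 ≤ m) ∧
    (k :: l).sum ≤ n ∧ List.Pairwise (· ≥ ·) (k :: l) ∧
    x = List.foldl (· * ·) (w k) (l.map w)}

/-- `Φ(r) = liminf_{n→∞} (log card W_r(n)) / (log n)`. -/
noncomputable def Phi {X : Type*} [Mul X] (w : ℕ → X) (r : ℕ) : ℝ :=
  Filter.liminf
    (fun n : ℕ => Real.log (Set.ncard (WrSet w r n)) / Real.log n) Filter.atTop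

/-- The sequence `{w_k}` has many partition products: `lim_{r→∞} Φ(r) = ∞`. -/
def ManyPartitionProducts {X : Type*} [Mul X] (w : ℕ → X) : Prop :=
  Filter.Tendsto (Phi w) Filter.atTop Filter.atTop

private lemma foldl_mul_eq_mul_prod {M : Type*} [Monoid M] (a : M) (l : List M) :
    List.foldl (· * ·) a l = a * l.prod := by
  induction l generalizing a with
  | nil => simp
  | cons x l ih => simp [ih, mul_assoc]

private lemma sum_map_add_two (l : List ℕ) :
    (l.map (fun j => j + 2)).sum = l.sum + 2 * l.length := by
  induction l with
  | nil => simp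
  | cons x l ih => simp [ih]; ring

private lemma foldl_E_mem {S : Type*} [Monoid S] (e g : S) (he : e * e = e)
    (k : ℕ) (l : List ℕ) :
    ∃ a : S, List.foldl (· * ·) (e * g ^ k * e)
      (l.map (fun j => e * g ^ j * e)) = e * a * e := by
  induction l using List.reverseRecOn with
  | nil => exact ⟨g ^ k, rfl⟩
  | append_singleton l j ih =>
    obtain ⟨a, ha⟩ := ih
    refine ⟨a * (e * g ^ j), ?_⟩
    rw [List.map_append, List.foldl_append, ha]
    have h2 : e * (e * (g ^ j * e)) = e * (g ^ j * e) := by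
      rw [← mul_assoc, he]
    simp only [List.map_cons, List.map_nil, List.foldl_cons, List.foldl_nil]
    simp only [mul_assoc, h2]

private lemma phi_foldl {S X : Type*} [Monoid S] [Semigroup X] (e g : S)
    (he : e * e = e) (φ : S → X)
    (hφ : ∀ x y : S, (∃ a : S, x = e * a * e) → (∃ b : S, y = e * b * e) →
      φ (x * y) = φ x * φ y) (k : ℕ) (l : List ℕ) :
    φ (List.foldl (· * ·) (e * g ^ k * e) (l.map (fun j => e * g ^ j * e)))
      = List.foldl (· * ·) (φ (e * g ^ k * e))
          (l.map (fun j => φ (e * g ^ j * e))) := by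
  induction l using List.reverseRecOn with
  | nil => simp
  | append_singleton l j ih =>
    rw [List.map_append, List.foldl_append, List.map_append, List.foldl_append]
    simp only [List.map_cons, List.map_nil, List.foldl_cons, List.foldl_nil]
    rw [hφ _ _ (foldl_E_mem e g he k l) ⟨g ^ j, rfl⟩, ih]

private lemma exists_word {S : Type*} [Monoid S] (e g : S) (k : ℕ) (l : List ℕ) :
    ∃ L : List S, (∀ a ∈ L, a ∈ ({e, g} : Set S)) ∧
      L.length = (k :: l).sum + 2 * (k :: l).length ∧
      L.prod = List.foldl (· * ·) (e * g ^ k * e)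
        (l.map (fun j => e * g ^ j * e)) := by
  refine ⟨((k :: l).map (fun j => e :: (List.replicate j g ++ [e]))).flatten,
    ?_, ?_, ?_⟩
  · intro a ha
    simp only [List.mem_flatten, List.mem_map] at ha
    obtain ⟨L', ⟨j, -, rfl⟩, haL'⟩ := ha
    simp only [List.mem_cons, List.mem_append, List.mem_replicate,
      List.mem_singleton, List.not_mem_nil, or_false] at haL'
    rcases haL' with rfl | ⟨-, rfl⟩ | rfl
    · exact Set.mem_insert _ _
    · exact Set.mem_insert_iff.mpr (Or.inr rfl)
    · exact Set.mem_insert _ _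
  · rw [List.length_flatten, List.map_map]
    have : ((k :: l).map (List.length ∘ fun j => e :: (List.replicate j g ++ [e])))
        = (k :: l).map (fun j => j + 2) := by
      apply List.map_congr_left
      intro j _
      simp
    rw [this, sum_map_add_two]
  · rw [List.prod_flatten, List.map_map]
    have h1 : ((k :: l).map (List.prod ∘ fun j => e :: (List.replicate j g ++ [e])))
        = (k :: l).map (fun j => e * g ^ j * e) := by
      apply List.map_congr_left
      intro j _
      simp [List.prod_replicate, mul_assoc]
    rw [h1, List.map_cons, List.prod_cons, foldl_mul_eq_mul_prod]

/-- let `S` be a semigroup with identity generated by `A = {e, g}`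
with `e` idempotent, `S₀ = eSe`, and `e g^{k₁} e g^{k₂} e = e g^{k₂} e g^{k₁} e`
for all `k₁, k₂ ≥ 0`.  If `φ` is a semigroup homomorphism from `S₀` into a
semigroup `X` such that the sequence `{φ(e gᵏ e)}` has many partition products,
then `S` has superpolynomial growth: `lim_{n→∞} (log γ_A(n))/(log n) = ∞`. -/
theorem stmt6 {S X : Type*} [Monoid S] [Semigroup X] (e g : S)
    (hgen : Generates ({e, g} : Set S)) (h1 : (1 : S) ∉ ({e, g} : Set S))
    (he : e * e = e)
    (hcomm : ∀ k₁ k₂ : ℕ,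
      e * g ^ k₁ * e * g ^ k₂ * e = e * g ^ k₂ * e * g ^ k₁ * e)
    (φ : S → X)
    (hφ : ∀ x y : S, (∃ a : S, x = e * a * e) → (∃ b : S, y = e * b * e) →
      φ (x * y) = φ x * φ y)
    (hW : ManyPartitionProducts (fun k : ℕ => φ (e * g ^ k * e))) :
    Tendsto (fun n : ℕ =>
        Real.log (growth ({e, g} : Set S) n) / Real.log n) atTop atTop := by
  classical
  set A : Set S := {e, g} with hA
  set w : ℕ → X := fun k => φ (e * g ^ k * e) with hw
  set G : ℕ → Set S := fun n =>
    {x : S | ∃ l : List S, (∀ a ∈ l, a ∈ A) ∧ l.length ≤ n ∧ l.prod = x} with hG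
  have hgrowth : ∀ n, growth A n = (G n).ncard := fun n => rfl
  have hAfin : A.Finite := (Set.finite_singleton g).insert e
  have : Finite (↥A) := hAfin.to_subtype
  -- G n is finite
  have hGfin : ∀ n, (G n).Finite := by
    intro n
    refine ((List.finite_length_le (↥A) n).image
      (fun l => (l.map Subtype.val).prod)).subset ?_
    rintro x ⟨l, hl, hlen, rfl⟩
    refine ⟨l.attach.map (fun a => (⟨a.1, hl a.1 a.2⟩ : ↥A)), by simpa using hlen, ?_⟩
    simp [List.map_map, Function.comp]
  -- monotonicity of G
  have hGmono : ∀ m n : ℕ, m ≤ n → G m ⊆ G n := by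
    rintro m n hmn x ⟨l, hl, hlen, rfl⟩
    exact ⟨l, hl, hlen.trans hmn, rfl⟩
  -- key inclusion
  have hkey : ∀ r m : ℕ, WrSet w r m ⊆ φ '' (G (m + 2 * r)) := by
    rintro r m x ⟨k, l, hlen, _, hsum, _, rfl⟩
    obtain ⟨L, hL1, hL2, hL3⟩ := exists_word e g k l
    refine ⟨List.foldl (· * ·) (e * g ^ k * e) (l.map (fun j => e * g ^ j * e)),
      ⟨L, hL1, ?_, hL3⟩, ?_⟩
    · rw [hL2, hlen]
      exact Nat.add_le_add_right hsum _
    · simp only [hw]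
      exact phi_foldl e g he φ hφ k l
  have hcard : ∀ r m n : ℕ, m + 2 * r ≤ n →
      Set.ncard (WrSet w r m) ≤ growth A n := by
    intro r m n hmn
    have h1 : WrSet w r m ⊆ φ '' (G n) :=
      (hkey r m).trans (Set.image_mono (hGmono _ _ hmn))
    calc Set.ncard (WrSet w r m) ≤ Set.ncard (φ '' (G n)) :=
          Set.ncard_le_ncard h1 ((hGfin n).image φ)
      _ ≤ Set.ncard (G n) := Set.ncard_image_le (hGfin n)
      _ = growth A n := (hgrowth n).symm
  -- analysis
  rw [tendsto_atTop]
  intro C0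
  set C : ℝ := max C0 1 with hCdef
  have hC1 : (1 : ℝ) ≤ C := le_max_right _ _
  have hC0 : C0 ≤ C := le_max_left _ _
  obtain ⟨r, hr⟩ := (tendsto_atTop.mp hW (C + 2)).exists
  have hbdd : ∀ n : ℕ,
      (0 : ℝ) ≤ Real.log (Set.ncard (WrSet w r n)) / Real.log n := by
    intro n
    apply div_nonneg
    · rcases Nat.eq_zero_or_pos (Set.ncard (WrSet w r n)) with h | h
      · simp [h]
      · exact Real.log_nonneg (by exact_mod_cast h)
    · rcases Nat.eq_zero_or_pos n with rfl | h
      · simp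
      · exact Real.log_nonneg (by exact_mod_cast h)
  have hlt : C + 1 < Phi w r := by
    have : C + 1 < C + 2 := by linarith
    exact lt_of_lt_of_le this hr
  have hev : ∀ᶠ m in atTop,
      C + 1 < Real.log (Set.ncard (WrSet w r m)) / Real.log m :=
    eventually_lt_of_lt_liminf hlt
      (isBoundedUnder_of ⟨0, fun n => hbdd n⟩)
  obtain ⟨N, hN⟩ := eventually_atTop.mp hev
  have hlog2ev : ∀ᶠ n : ℕ in atTop, (C + 1) * Real.log 2 ≤ Real.log n :=
    (Real.tendsto_log_atTop.comp tendsto_natCast_atTop_atTop).eventually_ge_atTop _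
  filter_upwards [eventually_ge_atTop (N + 4 * r + 2), hlog2ev] with n hn hlog2
  -- setup m = n - 2r
  set m : ℕ := n - 2 * r with hm
  have hm2 : m + 2 * r = n := Nat.sub_add_cancel (by omega)
  have hmN : N ≤ m := by omega
  have hm_ge2 : 2 ≤ m := by omega
  have hn_ge2 : 2 ≤ n := by omega
  have h2m : n ≤ 2 * m := by omega
  have hlogm_pos : 0 < Real.log m := Real.log_pos (by exact_mod_cast hm_ge2)
  have hlogn_pos : 0 < Real.log n :=
    Real.log_pos (by exact_mod_cast hn_ge2)
  have hNm := hN m hmN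
  have h2' : (C + 1) * Real.log m < Real.log (Set.ncard (WrSet w r m)) :=
    (lt_div_iff₀ hlogm_pos).mp hNm
  have hcard_pos : 1 ≤ Set.ncard (WrSet w r m) := by
    rcases Nat.eq_zero_or_pos (Set.ncard (WrSet w r m)) with h | h
    · rw [h] at h2'
      simp only [Nat.cast_zero, Real.log_zero] at h2'
      nlinarith
    · exact h
  have hgb : Set.ncard (WrSet w r m) ≤ growth A n := hcard r m n (le_of_eq hm2)
  have hgrowth_pos : 1 ≤ growth A n := le_trans hcard_pos hgb
  have hlog_growth : Real.log (Set.ncard (WrSet w r m)) ≤ Real.log (growth A n) := by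
    apply (Real.log_le_log_iff (by exact_mod_cast hcard_pos) ?_).mpr
    · exact_mod_cast hgb
    · exact_mod_cast lt_of_lt_of_le zero_lt_one hgrowth_pos
  -- log m ≥ log n - log 2
  have hlogm_lb : Real.log n - Real.log 2 ≤ Real.log m := by
    have h1 : (n : ℝ) / 2 ≤ (m : ℝ) := by
      rw [div_le_iff₀ (by norm_num)]
      have : (n : ℝ) ≤ 2 * m := by exact_mod_cast h2m
      linarith
    have h2 : Real.log ((n : ℝ) / 2) ≤ Real.log m := by
      apply (Real.log_le_log_iff ?_ ?_).mpr h1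
      · positivity
      · exact_mod_cast lt_of_lt_of_le (by norm_num) hm_ge2
    rwa [Real.log_div (by positivity) (by norm_num)] at h2
  -- final chain
  have hfinal : C * Real.log n ≤ Real.log (growth A n) := by
    have hc1 : C * Real.log n ≤ (C + 1) * (Real.log n - Real.log 2) := by
      nlinarith
    have hc2 : (C + 1) * (Real.log n - Real.log 2) ≤ (C + 1) * Real.log m :=
      mul_le_mul_of_nonneg_left hlogm_lb (by linarith)
    linarith
  have : C ≤ Real.log (growth A n) / Real.log n := by
    rw [le_div_iff₀ hlogn_pos]
    exact hfinal
  linarith
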